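/- For each k, l ≥ 0, the matrix-valued invariant β ↦ (∂^{k+l}/∂t^k ∂q^l) K(β)(−1, 1) is a finite type invariant of order k + l: its ℤ-linear extension to the group ring ℤ[B_n] vanishes on the (k+l+1)-st power of the ideal I generated by {σ_i − σ_i^{−1} : 1 ≤ i ≤ n−1}. -/

import Mathlib

open Matrix

noncomputable section

/-- Braid relations among the Artin generators `σ_1, …, σ_{n-1}`
(indexed here by `Fin (n-1)`, with `i : Fin (n-1)` standing for `σ_{i+1}`). -/
def braidRels (n : ℕ) : Set (FreeGroup (Fin (n - 1))) :=
  {r | (∃ i j : Fin (n - 1), (i : ℕ) + 1 = (j : ℕ) ∧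
          r = .of i * .of j * .of i * (.of j * .of i * .of j)⁻¹) ∨
       (∃ i j : Fin (n - 1), (i : ℕ) + 2 ≤ (j : ℕ) ∧
          r = .of i * .of j * (.of j * .of i)⁻¹)}

/-- The braid group `B_n` as a presented group. -/
abbrev Braid (n : ℕ) := PresentedGroup (braidRels n)

/-- The Artin generator `σ_{i+1}` of `B_n`. -/
def σg {n : ℕ} (i : Fin (n - 1)) : Braid n := PresentedGroup.of i

/-- Index set `{(i,j) : 1 ≤ i < j ≤ n}` for the Lawrence–Krammer basis `X_{i,j}`. -/
abbrev BP (n : ℕ) := {p : Fin (n + 1) × Fin (n + 1) // 0 < (p.1 : ℕ) ∧ (p.1 : ℕ) < (p.2 : ℕ)}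

/-- The standard basis row vector `X_{a,b}`. -/
def ee {R : Type*} [CommRing R] (n a b : ℕ) : BP n → R :=
  fun c => if (c.val.1 : ℕ) = a ∧ (c.val.2 : ℕ) = b then 1 else 0

/-- The Lawrence–Krammer matrix of the Artin generator `σ_m` (1-based `m`),
with parameters `t`, `q`; row `(i,j)` is the expansion of `X_{i,j}·σ_m` in the basis. -/
def LKgen {R : Type*} [CommRing R] (t q : R) (n m : ℕ) : Matrix (BP n) (BP n) R :=
  fun r c =>
    let i := (r.val.1 : ℕ); let j := (r.val.2 : ℕ)
    if m = i ∧ j = i + 1 then -(t * q ^ 2) * ee n i j c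
    else if m = i then
      q * ee n (i + 1) j c + (1 - q) * ee n i j c + t * q * (1 - q) * ee n i (i + 1) c
    else if m = j then
      q * ee n i (j + 1) c + (1 - q) * ee n i j c - q * (1 - q) * ee n j (j + 1) c
    else if m + 1 = i then ee n (i - 1) j c
    else if m + 1 = j then ee n i (j - 1) c
    else ee n i j c

/-- The field `ℚ(t,q)` of rational functions in two variables. -/
abbrev F2 := FractionRing (MvPolynomial (Fin 2) ℚ)

/-- The variable `t` in `ℚ(t,q)`. -/
def tt : F2 := algebraMap (MvPolynomial (Fin 2) ℚ) F2 (MvPolynomial.X 0)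

/-- The variable `q` in `ℚ(t,q)`. -/
def qq : F2 := algebraMap (MvPolynomial (Fin 2) ℚ) F2 (MvPolynomial.X 1)

/-- The power-series ring `ℚ[[t+1, q−1]]`: power series in `u = t+1` and `v = q−1`. -/
abbrev PS := MvPowerSeries (Fin 2) ℚ

/-- The variable `t = u − 1` in `ℚ[[u,v]]`, where `u = t + 1`. -/
def tP : PS := MvPowerSeries.X 0 - 1

/-- The variable `q = v + 1` in `ℚ[[u,v]]`, where `v = q − 1`. -/
def qP : PS := MvPowerSeries.X 1 + 1

/-- The `m`-th power `I^(m)` of the two-sided ideal of the group ring `ℤ[B_n]` generated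
by the elements `σ_i − σ_i⁻¹`, described as the `ℤ`-span of products with `m` factors
`σ_i − σ_i⁻¹` interleaved with arbitrary group ring elements. -/
def Ipow (n : ℕ) : ℕ → Submodule ℤ (MonoidAlgebra ℤ (Braid n))
  | 0 => ⊤
  | m + 1 =>
    Submodule.span ℤ
      {x | ∃ w ∈ Ipow n m, ∃ (i : Fin (n - 1)) (a : MonoidAlgebra ℤ (Braid n)),
        x = w * (MonoidAlgebra.of ℤ (Braid n) (σg i) -
                 MonoidAlgebra.of ℤ (Braid n) ((σg i)⁻¹)) * a}


section Aux

/-- The target map of the Lawrence–Krammer generator at `t = -1`, `q = 1`,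
in `ℕ × ℕ` coordinates. -/
def gLK (m : ℕ) (p : ℕ × ℕ) : ℕ × ℕ :=
  if m = p.1 ∧ p.2 = p.1 + 1 then p
  else if m = p.1 then (p.1 + 1, p.2)
  else if m = p.2 then (p.1, p.2 + 1)
  else if m + 1 = p.1 then (p.1 - 1, p.2)
  else if m + 1 = p.2 then (p.1, p.2 - 1)
  else p

lemma gLK_eval (m a b : ℕ) :
    gLK m (a, b) =
      if m = a ∧ b = a + 1 then (a, b)
      else if m = a then (a + 1, b)
      else if m = b then (a, b + 1)
      else if m + 1 = a then (a - 1, b)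
      else if m + 1 = b then (a, b - 1)
      else (a, b) := rfl

lemma gLK_spec {n m i j : ℕ} (hm1 : 1 ≤ m) (hm2 : m + 1 ≤ n)
    (hi : 0 < i) (hij : i < j) (hj : j ≤ n) :
    0 < (gLK m (i, j)).1 ∧ (gLK m (i, j)).1 < (gLK m (i, j)).2 ∧ (gLK m (i, j)).2 ≤ n ∧
      gLK m (gLK m (i, j)) = (i, j) := by
  rw [gLK_eval]
  split_ifs <;> rw [gLK_eval] <;> split_ifs <;>
    simp only [Prod.mk.injEq, and_true, true_and] <;> (try dsimp only) <;> omega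

lemma LK_entry (n m : ℕ) (r x : BP n) :
    LKgen (-1 : ℚ) 1 n m r x =
      if ((x.val.1 : ℕ), (x.val.2 : ℕ)) = gLK m ((r.val.1 : ℕ), (r.val.2 : ℕ)) then 1 else 0 := by
  simp only [LKgen, gLK, ee, Prod.mk.injEq]
  split_ifs
  all_goals try simp only [Prod.mk.injEq] at *
  all_goals try norm_num
  all_goals omega

lemma Asq {n m : ℕ} (hm1 : 1 ≤ m) (hm2 : m + 1 ≤ n) :
    LKgen (-1 : ℚ) 1 n m * LKgen (-1 : ℚ) 1 n m = 1 := by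
  ext r c
  have hr2 : (r.val.2 : ℕ) ≤ n := Nat.lt_succ_iff.mp r.val.2.isLt
  obtain ⟨hp1, hp12, hp2, hinv⟩ := gLK_spec (n := n) hm1 hm2 r.2.1 r.2.2 hr2
  set p := gLK m ((r.val.1 : ℕ), (r.val.2 : ℕ)) with hp
  have hx01 : p.1 < n + 1 := by omega
  have hx02 : p.2 < n + 1 := by omega
  set x0 : BP n := ⟨(⟨p.1, hx01⟩, ⟨p.2, hx02⟩), ⟨hp1, hp12⟩⟩ with hx0
  have hterm : ∀ x : BP n,
      LKgen (-1 : ℚ) 1 n m r x * LKgen (-1 : ℚ) 1 n m x c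
        = if x = x0 then (if r = c then 1 else 0) else 0 := by
    intro x
    rw [LK_entry, LK_entry]
    by_cases hx : x = x0
    · subst hx
      have hco : (((x0.val.1 : ℕ)), ((x0.val.2 : ℕ))) = p := rfl
      rw [if_pos hco, one_mul, hco, hinv, if_pos (rfl : x0 = x0)]
      by_cases hc : r = c
      · subst hc; rw [if_pos rfl, if_pos rfl]
      · have hcond : ¬(((c.val.1 : ℕ), (c.val.2 : ℕ)) = ((r.val.1 : ℕ), (r.val.2 : ℕ))) := by
          intro h
          exact hc (Subtype.ext (Prod.ext_iff.mpr
            ⟨Fin.ext (congrArg Prod.fst h).symm, Fin.ext (congrArg Prod.snd h).symm⟩))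
        rw [if_neg hcond, if_neg hc]
    · have hcond : ¬(((x.val.1 : ℕ), (x.val.2 : ℕ)) = p) := by
        intro h
        exact hx (Subtype.ext (Prod.ext_iff.mpr
          ⟨Fin.ext (congrArg Prod.fst h), Fin.ext (congrArg Prod.snd h)⟩))
      rw [if_neg hcond, zero_mul, if_neg hx]
  rw [Matrix.mul_apply, Matrix.one_apply,
    Finset.sum_congr rfl (fun x _ => hterm x), Finset.sum_ite_eq']
  simp only [Finset.mem_univ, if_true]

/-- "All coefficients of total degree `< m` vanish". -/
def lowC (m : ℕ) (f : PS) : Prop :=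
  ∀ d : Fin 2 →₀ ℕ, d 0 + d 1 < m → MvPowerSeries.coeff d f = 0

lemma lowC_mul {a b : ℕ} {f g : PS} (hf : lowC a f) (hg : lowC b g) :
    lowC (a + b) (f * g) := by
  intro d hd
  rw [MvPowerSeries.coeff_mul]
  apply Finset.sum_eq_zero
  intro x hx
  rw [Finset.HasAntidiagonal.mem_antidiagonal] at hx
  have h0 : x.1 0 + x.2 0 = d 0 := by rw [← hx]; rfl
  have h1 : x.1 1 + x.2 1 = d 1 := by rw [← hx]; rfl
  rcases lt_or_ge (x.1 0 + x.1 1) a with h | h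
  · rw [hf _ h, zero_mul]
  · rw [hg _ (by omega), mul_zero]

/-- Matrix version of `lowC`. -/
def lowM {n : ℕ} (m : ℕ) (A : Matrix (BP n) (BP n) PS) : Prop :=
  ∀ r c, lowC m (A r c)

lemma lowM_mul {n a b : ℕ} {A B : Matrix (BP n) (BP n) PS}
    (hA : lowM a A) (hB : lowM b B) : lowM (a + b) (A * B) := by
  intro r c d hd
  rw [Matrix.mul_apply, map_sum]
  exact Finset.sum_eq_zero fun x _ => lowC_mul (hA r x) (hB x c) d hd

lemma lowM_zero {n m : ℕ} : lowM (n := n) m 0 := by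
  intro r c d _; simp

lemma lowM_add {n m : ℕ} {A B : Matrix (BP n) (BP n) PS}
    (hA : lowM m A) (hB : lowM m B) : lowM m (A + B) := by
  intro r c d hd
  simp only [Matrix.add_apply, map_add, hA r c d hd, hB r c d hd, add_zero]

lemma lowM_smul {n m : ℕ} (z : ℤ) {A : Matrix (BP n) (BP n) PS}
    (hA : lowM m A) : lowM m (z • A) := by
  intro r c d hd
  simp only [Matrix.smul_apply, map_zsmul, hA r c d hd, smul_zero]

lemma lowM_top {n : ℕ} (A : Matrix (BP n) (BP n) PS) : lowM 0 A := by
  intro r c d hd; omega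

end Aux

section KeyStep

variable {n : ℕ} (K : Braid n →* GL (BP n) PS)

/-- Constant coefficient map. -/
def CC : PS →+* ℚ := MvPowerSeries.constantCoeff

lemma CC_tP : CC tP = -1 := by
  simp [CC, tP, map_sub]

lemma CC_qP : CC qP = 1 := by
  simp [CC, qP, map_add]

lemma map_LKgen (n m : ℕ) :
    (LKgen tP qP n m).map CC = LKgen (-1 : ℚ) 1 n m := by
  ext r c
  simp only [LKgen, Matrix.map_apply]
  split_ifs <;>
    simp [ee, apply_ite CC, _root_.map_add, _root_.map_mul, _root_.map_sub,
      _root_.map_neg, map_pow, _root_.map_one, CC_tP, CC_qP]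

lemma map_K_gen (hK : ∀ m : Fin (n - 1),
      (K (σg m) : Matrix (BP n) (BP n) PS) = LKgen tP qP n ((m : ℕ) + 1))
    (i : Fin (n - 1)) :
    ((K (σg i) : Matrix (BP n) (BP n) PS)).map CC = LKgen (-1 : ℚ) 1 n ((i : ℕ) + 1) := by
  rw [hK i, map_LKgen]

lemma map_K_gen_inv (hK : ∀ m : Fin (n - 1),
      (K (σg m) : Matrix (BP n) (BP n) PS) = LKgen tP qP n ((m : ℕ) + 1))
    (i : Fin (n - 1)) :
    ((K ((σg i)⁻¹) : Matrix (BP n) (BP n) PS)).map CC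
      = LKgen (-1 : ℚ) 1 n ((i : ℕ) + 1) := by
  have hilt : (i : ℕ) < n - 1 := i.isLt
  have hm1 : 1 ≤ (i : ℕ) + 1 := by omega
  have hm2 : (i : ℕ) + 1 + 1 ≤ n := by omega
  set A : Matrix (BP n) (BP n) ℚ := LKgen (-1 : ℚ) 1 n ((i : ℕ) + 1) with hA
  set B : Matrix (BP n) (BP n) ℚ := ((K ((σg i)⁻¹) : Matrix (BP n) (BP n) PS)).map CC with hB
  have h1 : (K (σg i) : Matrix (BP n) (BP n) PS) * (K ((σg i)⁻¹) : Matrix (BP n) (BP n) PS) = 1 := by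
    rw [← Units.val_mul, ← _root_.map_mul, mul_inv_cancel, _root_.map_one, Units.val_one]
  have h1' : A * B = 1 := by
    rw [hA, hB, ← map_K_gen K hK i, ← Matrix.map_mul, h1,
      Matrix.map_one _ (map_zero CC) (map_one CC)]
  calc B = 1 * B := (one_mul B).symm
    _ = (A * A) * B := by rw [Asq hm1 hm2]
    _ = A * (A * B) := by rw [mul_assoc]
    _ = A * 1 := by rw [h1']
    _ = A := mul_one A

lemma lowM_gen (hK : ∀ m : Fin (n - 1),
      (K (σg m) : Matrix (BP n) (BP n) PS) = LKgen tP qP n ((m : ℕ) + 1))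
    (i : Fin (n - 1)) :
    lowM 1 ((K (σg i) : Matrix (BP n) (BP n) PS)
      - (K ((σg i)⁻¹) : Matrix (BP n) (BP n) PS)) := by
  intro r c d hd
  have hd0 : d = 0 := by
    ext a; fin_cases a <;> simp <;> omega
  subst hd0
  rw [MvPowerSeries.coeff_zero_eq_constantCoeff]
  have h := congrFun (congrFun ((map_K_gen K hK i).trans (map_K_gen_inv K hK i).symm) r) c
  simp only [Matrix.map_apply] at h
  simpa [Matrix.sub_apply, _root_.map_sub, CC] using sub_eq_zero.mpr h

lemma Ipow_lowM (hK : ∀ m : Fin (n - 1),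
      (K (σg m) : Matrix (BP n) (BP n) PS) = LKgen tP qP n ((m : ℕ) + 1)) :
    ∀ m, ∀ W ∈ Ipow n m,
      lowM m ((MonoidAlgebra.lift ℤ (Matrix (BP n) (BP n) PS) (Braid n)
        ((Units.coeHom (Matrix (BP n) (BP n) PS)).comp K)) W) := by
  set L := (MonoidAlgebra.lift ℤ (Matrix (BP n) (BP n) PS) (Braid n)
      ((Units.coeHom (Matrix (BP n) (BP n) PS)).comp K)) with hL
  intro m
  induction m with
  | zero => intro W _; exact lowM_top _
  | succ m ih =>
    intro W hW
    refine Submodule.span_induction ?_ ?_ ?_ ?_ hW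
    · rintro x ⟨w, hw, i, a, rfl⟩
      have hD : L (MonoidAlgebra.of ℤ (Braid n) (σg i)
            - MonoidAlgebra.of ℤ (Braid n) ((σg i)⁻¹))
          = (K (σg i) : Matrix (BP n) (BP n) PS)
            - (K ((σg i)⁻¹) : Matrix (BP n) (BP n) PS) := by
        rw [_root_.map_sub, hL, MonoidAlgebra.lift_of, MonoidAlgebra.lift_of]
        rfl
      have hD1 : lowM 1 (L (MonoidAlgebra.of ℤ (Braid n) (σg i)
          - MonoidAlgebra.of ℤ (Braid n) ((σg i)⁻¹))) := by
        rw [hD]; exact lowM_gen K hK i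
      have hmul : lowM ((m + 1) + 0) (L w * (L (MonoidAlgebra.of ℤ (Braid n) (σg i)
          - MonoidAlgebra.of ℤ (Braid n) ((σg i)⁻¹))) * L a) :=
        lowM_mul (lowM_mul (ih w hw) hD1) (lowM_top _)
      simpa only [_root_.map_mul, Nat.add_zero] using hmul
    · simpa only [map_zero] using lowM_zero (n := n) (m := m + 1)
    · intro x y _ _ hx hy
      simpa only [_root_.map_add] using lowM_add hx hy
    · intro z x _ hx
      simpa only [map_zsmul] using lowM_smul z hx

end KeyStep

/-- For each `k, l ≥ 0`, the matrix invariant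
`β ↦ (∂^{k+l}/∂t^k ∂q^l) K(β)(−1,1)` — which, expanding the entries of `K(β)` as power
series in `u = t+1`, `v = q−1`, equals `k!·l!` times the coefficient of `u^k v^l` — is a
finite type invariant of order `k+l`: its `ℤ`-linear extension to the group ring
`ℤ[B_n]` vanishes on `I^(k+l+1)`, the `(k+l+1)`-st power of the ideal generated by the
elements `σ_i − σ_i⁻¹`. -/
theorem lk_derivative_finite_type (n : ℕ) (K : Braid n →* GL (BP n) PS)
    (hK : ∀ m : Fin (n - 1),
      (K (σg m) : Matrix (BP n) (BP n) PS) = LKgen tP qP n ((m : ℕ) + 1))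
    (k l : ℕ) (W : MonoidAlgebra ℤ (Braid n)) (hW : W ∈ Ipow n (k + l + 1)) (r c : BP n) :
    (k.factorial * l.factorial : ℚ) *
      MvPowerSeries.coeff (Finsupp.single 0 k + Finsupp.single 1 l)
        ((MonoidAlgebra.lift ℤ (Matrix (BP n) (BP n) PS) (Braid n)
            ((Units.coeHom (Matrix (BP n) (BP n) PS)).comp K) W) r c) = 0 := by
  have h := Ipow_lowM K hK (k + l + 1) W hW r c
    (Finsupp.single 0 k + Finsupp.single 1 l)
    (by
      simp only [Finsupp.add_apply, Finsupp.single_apply]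
      norm_num)
  rw [h, mul_zero]
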